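/- Suppose that for all compartments α, β ∈ X the kernels satisfy G_{αβ} ∈ L¹_loc(ℝ₊; ℝ₊^{|β|×|α|}) and K_α ∈ L¹_loc(ℝ₊; ℝ₊^{|α|×|α|}), and the forcing functions satisfy S_α⁰, J_α⁰ ∈ L¹_loc(ℝ₊; ℝ₊^{|α|}), and let (N_α, S_α, J_α) be the unique solution of the generalized RFE system. Assume in addition that for all α ∈ X and all j ∈ α one has ∫₀^∞ e_α^⊤ J_α⁰(r) dr ≤ N_α⁰ and ∫₀^∞ [e_α^⊤ K_α(r)]_j dr ≤ 1. Then N_α(t) ≥ 0 for all t ≥ 0 and all α ∈ X. -/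

import Mathlib

open MeasureTheory Matrix

/-- A solution of the generalized Response Function Equation (RFE) system. -/
def IsGenRFESol {X : Type*} [Fintype X] [DecidableEq X] (d : X → ℕ)
    (G : (α β : X) → ℝ → Matrix (Fin (d β)) (Fin (d α)) ℝ)
    (K : (α : X) → ℝ → Matrix (Fin (d α)) (Fin (d α)) ℝ)
    (S0 J0 : (α : X) → ℝ → Fin (d α) → ℝ)
    (N0 : X → ℝ)
    (S J : (α : X) → ℝ → Fin (d α) → ℝ) (N : X → ℝ → ℝ) : Prop :=
  (∀ α i, LocallyIntegrableOn (fun t => S α t i) (Set.Ici 0)) ∧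
  (∀ α i, LocallyIntegrableOn (fun t => J α t i) (Set.Ici 0)) ∧
  (∀ α i t, 0 ≤ t → 0 ≤ S α t i) ∧
  (∀ α i t, 0 ≤ t → 0 ≤ J α t i) ∧
  (∀ α, ∀ᵐ t ∂(volume.restrict (Set.Ici (0:ℝ))),
      S α t = S0 α t + ∑ β ∈ Finset.univ.erase α,
        ∫ s in (0:ℝ)..t, (G β α (t - s)).mulVec (S β s)) ∧
  (∀ α, ∀ᵐ t ∂(volume.restrict (Set.Ici (0:ℝ))),
      J α t = J0 α t + ∫ s in (0:ℝ)..t, (K α (t - s)).mulVec (S α s)) ∧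
  (∀ α, N α 0 = N0 α) ∧
  (∀ α t, 0 ≤ t →
      N α t = N0 α + ∫ s in (0:ℝ)..t, ((∑ i, S α s i) - (∑ i, J α s i)))

private lemma aux_conv_bound (f g : ℝ → ENNReal) (hf : Measurable f) (hg : Measurable g) (t : ℝ) :
    ∫⁻ u in Set.Ioc 0 t, ∫⁻ s in Set.Ioc 0 u, f (u - s) * g s ≤
      (∫⁻ r in Set.Ici 0, f r) * ∫⁻ s in Set.Ioc 0 t, g s := by
  set H : ℝ → ℝ → ENNReal := fun u s =>
    if u ∈ Set.Ioc 0 t ∧ s ∈ Set.Ioc 0 u then f (u - s) * g s else 0 with hH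
  have hmeas : Measurable (Function.uncurry H) := by
    apply Measurable.ite ?_ ((hf.comp (measurable_fst.sub measurable_snd)).mul
      (hg.comp measurable_snd)) measurable_const
    simp only [Set.mem_Ioc]
    exact (((measurableSet_lt measurable_const measurable_fst).inter
      (measurableSet_le measurable_fst measurable_const)).inter
      ((measurableSet_lt measurable_const measurable_snd).inter
        (measurableSet_le measurable_snd measurable_fst)))
  have key : ∫⁻ u in Set.Ioc 0 t, ∫⁻ s in Set.Ioc 0 u, f (u - s) * g s
      = ∫⁻ u, ∫⁻ s, H u s := by
    rw [← lintegral_indicator measurableSet_Ioc]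
    congr 1; ext u
    by_cases hu : u ∈ Set.Ioc 0 t
    · rw [Set.indicator_of_mem hu, ← lintegral_indicator measurableSet_Ioc]
      congr 1; ext s
      by_cases hs : s ∈ Set.Ioc 0 u
      · rw [Set.indicator_of_mem hs, hH]; simp [hu, hs]
      · rw [Set.indicator_of_notMem hs, hH]; simp [hs]
    · rw [Set.indicator_of_notMem hu]
      symm; simp only [hH]
      rw [← lintegral_zero]
      congr 1; ext s; simp [hu]
  rw [key, lintegral_lintegral_swap hmeas.aemeasurable]
  have hb : ∀ s, ∫⁻ u, H u s ≤
      (Set.Ioc 0 t).indicator g s * ∫⁻ r in Set.Ici 0, f r := by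
    intro s
    have hpt : ∀ u, H u s ≤ (Set.Ioc 0 t).indicator g s * (Set.Ici 0).indicator f (u - s) := by
      intro u
      by_cases h : u ∈ Set.Ioc 0 t ∧ s ∈ Set.Ioc 0 u
      · obtain ⟨hu, hs⟩ := h
        have hst : s ∈ Set.Ioc 0 t := ⟨hs.1, hs.2.trans hu.2⟩
        have hus : u - s ∈ Set.Ici (0:ℝ) := by simp [Set.mem_Ici]; linarith [hs.2]
        rw [hH]; simp only [hu, hs, and_self, if_true,
          Set.indicator_of_mem hst, Set.indicator_of_mem hus]
        rw [mul_comm]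
      · rw [hH]
        simp only [Set.mem_Ioc] at h ⊢
        rw [if_neg h]
        exact zero_le
    calc ∫⁻ u, H u s ≤ ∫⁻ u, (Set.Ioc 0 t).indicator g s * (Set.Ici 0).indicator f (u - s) :=
          lintegral_mono hpt
      _ = (Set.Ioc 0 t).indicator g s * ∫⁻ u, (Set.Ici 0).indicator f (u - s) := by
          rw [lintegral_const_mul]
          exact (hf.indicator measurableSet_Ici).comp (measurable_id.sub measurable_const)
      _ = (Set.Ioc 0 t).indicator g s * ∫⁻ r in Set.Ici 0, f r := by
          rw [(measurePreserving_sub_right volume s).lintegral_comp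
            (hf.indicator measurableSet_Ici), lintegral_indicator measurableSet_Ici]
  calc ∫⁻ s, ∫⁻ u, H u s ≤ ∫⁻ s, (Set.Ioc 0 t).indicator g s * ∫⁻ r in Set.Ici 0, f r :=
        lintegral_mono hb
    _ = (∫⁻ s, (Set.Ioc 0 t).indicator g s) * ∫⁻ r in Set.Ici 0, f r := by
        rw [lintegral_mul_const]
        exact hg.indicator measurableSet_Ioc
    _ = (∫⁻ r in Set.Ici 0, f r) * ∫⁻ s in Set.Ioc 0 t, g s := by
        rw [lintegral_indicator measurableSet_Ioc, mul_comm]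

/-- **Positivity of the concentrations for the generalized RFE system.**
Under the local integrability and nonnegativity assumptions on the kernels and forcing
functions, if moreover `∫₀^∞ e_α^⊤ J_α⁰(r) dr ≤ N_α⁰` and `∫₀^∞ [e_α^⊤ K_α(r)]_j dr ≤ 1`
for all `α ∈ X` and `j ∈ α`, then the solution satisfies `N_α(t) ≥ 0` for all `t ≥ 0`. -/
theorem genRFE_positivity {X : Type*} [Fintype X] [DecidableEq X] (d : X → ℕ)
    (G : (α β : X) → ℝ → Matrix (Fin (d β)) (Fin (d α)) ℝ)
    (K : (α : X) → ℝ → Matrix (Fin (d α)) (Fin (d α)) ℝ)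
    (S0 J0 : (α : X) → ℝ → Fin (d α) → ℝ)
    (N0 : X → ℝ)
    (hGloc : ∀ α β i j, LocallyIntegrableOn (fun t => G α β t i j) (Set.Ici 0))
    (hGnn : ∀ α β t, 0 ≤ t → ∀ i j, 0 ≤ G α β t i j)
    (hKloc : ∀ α i j, LocallyIntegrableOn (fun t => K α t i j) (Set.Ici 0))
    (hKnn : ∀ α t, 0 ≤ t → ∀ i j, 0 ≤ K α t i j)
    (hS0loc : ∀ α i, LocallyIntegrableOn (fun t => S0 α t i) (Set.Ici 0))
    (hS0nn : ∀ α t, 0 ≤ t → ∀ i, 0 ≤ S0 α t i)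
    (hJ0loc : ∀ α i, LocallyIntegrableOn (fun t => J0 α t i) (Set.Ici 0))
    (hJ0nn : ∀ α t, 0 ≤ t → ∀ i, 0 ≤ J0 α t i)
    (hN0 : ∀ α, 0 ≤ N0 α)
    (S J : (α : X) → ℝ → Fin (d α) → ℝ) (N : X → ℝ → ℝ)
    (hsol : IsGenRFESol d G K S0 J0 N0 S J N)
    -- `∫₀^∞ e_α^⊤ J_α⁰(r) dr ≤ N_α⁰`
    (hJ0bound : ∀ α, ∫⁻ r in Set.Ici (0:ℝ), ENNReal.ofReal (∑ i, J0 α r i)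
        ≤ ENNReal.ofReal (N0 α))
    -- `∫₀^∞ [e_α^⊤ K_α(r)]_j dr ≤ 1`
    (hKbound : ∀ α (j : Fin (d α)),
        ∫⁻ r in Set.Ici (0:ℝ), ENNReal.ofReal (∑ i, K α r i j) ≤ 1) :
    ∀ α t, 0 ≤ t → 0 ≤ N α t := by
  obtain ⟨hSloc, hJloc, hSnn, hJnn, -, hJeq, -, hNeq⟩ := hsol
  intro α t ht
  have hsub : Set.Ioc (0:ℝ) t ⊆ Set.Ici 0 := fun x hx => le_of_lt hx.1
  -- integrability of the summed functions on `Ioc 0 t`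
  have hSint : ∀ i, IntegrableOn (fun s => S α s i) (Set.Ioc 0 t) volume := fun i =>
    ((hSloc α i).integrableOn_compact_subset Set.Icc_subset_Ici_self isCompact_Icc).mono_set
      Set.Ioc_subset_Icc_self
  have hJint : ∀ i, IntegrableOn (fun s => J α s i) (Set.Ioc 0 t) volume := fun i =>
    ((hJloc α i).integrableOn_compact_subset Set.Icc_subset_Ici_self isCompact_Icc).mono_set
      Set.Ioc_subset_Icc_self
  have hFint : IntegrableOn (fun s => ∑ i, S α s i) (Set.Ioc 0 t) volume :=
    integrable_finset_sum _ fun i _ => hSint i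
  have hHint : IntegrableOn (fun s => ∑ i, J α s i) (Set.Ioc 0 t) volume :=
    integrable_finset_sum _ fun i _ => hJint i
  have hFI : IntervalIntegrable (fun s => ∑ i, S α s i) volume 0 t :=
    (intervalIntegrable_iff_integrableOn_Ioc_of_le ht).2 hFint
  have hHI : IntervalIntegrable (fun s => ∑ i, J α s i) volume 0 t :=
    (intervalIntegrable_iff_integrableOn_Ioc_of_le ht).2 hHint
  rw [hNeq α t ht, intervalIntegral.integral_sub hFI hHI]
  have key : ∫ s in (0:ℝ)..t, (∑ i, J α s i) ≤ N0 α + ∫ s in (0:ℝ)..t, (∑ i, S α s i) := by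
    rw [intervalIntegral.integral_of_le ht, intervalIntegral.integral_of_le ht]
    have hFnn : 0 ≤ᵐ[volume.restrict (Set.Ioc 0 t)] fun s => ∑ i, S α s i :=
      ae_restrict_of_forall_mem measurableSet_Ioc fun s hs =>
        Finset.sum_nonneg fun i _ => hSnn α i s hs.1.le
    have hHnn : 0 ≤ᵐ[volume.restrict (Set.Ioc 0 t)] fun s => ∑ i, J α s i :=
      ae_restrict_of_forall_mem measurableSet_Ioc fun s hs =>
        Finset.sum_nonneg fun i _ => hJnn α i s hs.1.le
    rw [integral_eq_lintegral_of_nonneg_ae hHnn hHint.aestronglyMeasurable,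
        integral_eq_lintegral_of_nonneg_ae hFnn hFint.aestronglyMeasurable]
    have hRFfin : (∫⁻ u in Set.Ioc 0 t, ENNReal.ofReal (∑ i, S α u i)) ≠ ⊤ :=
      hFint.lintegral_lt_top.ne
    -- measurable representatives of `ENNReal.ofReal ∘ K` and `ENNReal.ofReal ∘ S`
    have hKex : ∀ i j : Fin (d α), ∃ φ : ℝ → ENNReal, Measurable φ ∧
        (fun r => ENNReal.ofReal (K α r i j)) =ᵐ[volume.restrict (Set.Ici 0)] φ := by
      intro i j
      have h : AEMeasurable (fun r => ENNReal.ofReal (K α r i j))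
          (volume.restrict (Set.Ici 0)) :=
        ENNReal.measurable_ofReal.comp_aemeasurable
          (hKloc α i j).aestronglyMeasurable.aemeasurable
      exact ⟨h.mk _, h.measurable_mk, h.ae_eq_mk⟩
    choose Kt hKtm hKtae using hKex
    have hSex : ∀ j : Fin (d α), ∃ φ : ℝ → ENNReal, Measurable φ ∧
        (fun s => ENNReal.ofReal (S α s j)) =ᵐ[volume.restrict (Set.Ici 0)] φ := by
      intro j
      have h : AEMeasurable (fun s => ENNReal.ofReal (S α s j))
          (volume.restrict (Set.Ici 0)) :=
        ENNReal.measurable_ofReal.comp_aemeasurable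
          (hSloc α j).aestronglyMeasurable.aemeasurable
      exact ⟨h.mk _, h.measurable_mk, h.ae_eq_mk⟩
    choose St hStm hStae using hSex
    -- measurability of the iterated kernels
    have hΦmeas : ∀ i j : Fin (d α),
        Measurable (fun u => ∫⁻ s in Set.Ioc 0 u, Kt i j (u - s) * St j s) := by
      intro i j
      have heq : (fun u => ∫⁻ s in Set.Ioc 0 u, Kt i j (u - s) * St j s)
          = fun u => ∫⁻ s, (fun p : ℝ × ℝ =>
              if p.2 ∈ Set.Ioc 0 p.1 then Kt i j (p.1 - p.2) * St j p.2 else 0) (u, s) := by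
        funext u
        rw [← lintegral_indicator measurableSet_Ioc]
        congr 1; funext s
        simp [Set.indicator_apply]
      have hF : Measurable (fun p : ℝ × ℝ =>
          if p.2 ∈ Set.Ioc 0 p.1 then Kt i j (p.1 - p.2) * St j p.2 else 0) := by
        apply Measurable.ite ?_ (((hKtm i j).comp (measurable_fst.sub measurable_snd)).mul
          ((hStm j).comp measurable_snd)) measurable_const
        simp only [Set.mem_Ioc]
        exact (measurableSet_lt measurable_const measurable_snd).inter
          (measurableSet_le measurable_snd measurable_fst)
      rw [heq]
      exact hF.lintegral_prod_right'
    -- the key pointwise bound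
    have claimA : ∀ u ∈ Set.Ioc (0:ℝ) t,
        ENNReal.ofReal (∑ i, (∫ s in (0:ℝ)..u, (K α (u - s)).mulVec (S α s)) i)
          ≤ ∑ i, ∑ j, ∫⁻ s in Set.Ioc 0 u, Kt i j (u - s) * St j s := by
      intro u hu
      have hu0 : (0:ℝ) ≤ u := hu.1.le
      have hintnn : ∀ (i : Fin (d α)), ∀ s ∈ Set.Icc (0:ℝ) u,
          0 ≤ (K α (u - s)).mulVec (S α s) i := by
        intro i s hs
        simp only [Matrix.mulVec, dotProduct]
        exact Finset.sum_nonneg fun j _ =>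
          mul_nonneg (hKnn α (u - s) (by linarith [hs.2]) i j) (hSnn α j s hs.1)
      by_cases hvec : IntervalIntegrable (fun s => (K α (u - s)).mulVec (S α s)) volume 0 u
      · have hcomp : ∀ i, (∫ s in (0:ℝ)..u, (K α (u - s)).mulVec (S α s)) i
            = ∫ s in (0:ℝ)..u, (K α (u - s)).mulVec (S α s) i := by
          intro i
          have h1 := ((ContinuousLinearMap.proj i :
            (Fin (d α) → ℝ) →L[ℝ] ℝ)).intervalIntegral_comp_comm hvec
          simpa using h1.symm
        have hci : ∀ i, IntegrableOn (fun s => (K α (u - s)).mulVec (S α s) i)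
            (Set.Ioc 0 u) volume := by
          intro i
          have hv := (intervalIntegrable_iff_integrableOn_Ioc_of_le hu0).1 hvec
          exact ((ContinuousLinearMap.proj i :
            (Fin (d α) → ℝ) →L[ℝ] ℝ)).integrable_comp hv
        have hIvecnn : ∀ i, 0 ≤ (∫ s in (0:ℝ)..u, (K α (u - s)).mulVec (S α s)) i := by
          intro i
          rw [hcomp i]
          exact intervalIntegral.integral_nonneg hu0 (hintnn i)
        rw [ENNReal.ofReal_sum_of_nonneg fun i _ => hIvecnn i]
        refine Finset.sum_le_sum fun i _ => ?_
        rw [hcomp i, intervalIntegral.integral_of_le hu0]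
        have hnn_ae : 0 ≤ᵐ[volume.restrict (Set.Ioc 0 u)]
            fun s => (K α (u - s)).mulVec (S α s) i :=
          ae_restrict_of_forall_mem measurableSet_Ioc fun s hs =>
            hintnn i s (Set.Ioc_subset_Icc_self hs)
        rw [ofReal_integral_eq_lintegral_ofReal (hci i) hnn_ae]
        have haeS : ∀ᵐ s ∂(volume.restrict (Set.Ioc (0:ℝ) u)), ∀ j,
            ENNReal.ofReal (S α s j) = St j s := by
          rw [ae_all_iff]
          intro j
          exact ae_restrict_of_ae_restrict_of_subset (fun x hx => le_of_lt hx.1) (hStae j)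
        have haeK : ∀ᵐ s ∂(volume.restrict (Set.Ioc (0:ℝ) u)), ∀ j,
            ENNReal.ofReal (K α (u - s) i j) = Kt i j (u - s) := by
          rw [ae_all_iff]
          intro j
          have h0 : ∀ᵐ r ∂(volume : Measure ℝ), r ∈ Set.Ici (0:ℝ) →
              ENNReal.ofReal (K α r i j) = Kt i j r :=
            (ae_restrict_iff' measurableSet_Ici).1 (hKtae i j)
          have h1 : ∀ᵐ s ∂(volume : Measure ℝ), u - s ∈ Set.Ici (0:ℝ) →
              ENNReal.ofReal (K α (u - s) i j) = Kt i j (u - s) :=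
            (MeasureTheory.Measure.measurePreserving_sub_left volume u).quasiMeasurePreserving.ae h0
          filter_upwards [ae_restrict_of_ae h1, ae_restrict_mem measurableSet_Ioc] with s hs hmem
          exact hs (by simp only [Set.mem_Ici]; linarith [hmem.2])
        have hcongr : (fun s => ENNReal.ofReal ((K α (u - s)).mulVec (S α s) i))
            =ᵐ[volume.restrict (Set.Ioc (0:ℝ) u)]
            fun s => ∑ j, Kt i j (u - s) * St j s := by
          filter_upwards [haeS, haeK, ae_restrict_mem measurableSet_Ioc] with s hS hK hmem
          have h1 : (K α (u - s)).mulVec (S α s) i = ∑ j, K α (u - s) i j * S α s j := by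
            simp [Matrix.mulVec, dotProduct]
          rw [h1, ENNReal.ofReal_sum_of_nonneg fun j _ =>
            mul_nonneg (hKnn α (u - s) (by linarith [hmem.2]) i j) (hSnn α j s hmem.1.le)]
          refine Finset.sum_congr rfl fun j _ => ?_
          rw [ENNReal.ofReal_mul (hKnn α (u - s) (by linarith [hmem.2]) i j), hS j, hK j]
        have hmeasj : ∀ j ∈ (Finset.univ : Finset (Fin (d α))),
            AEMeasurable (fun s : ℝ => Kt i j (u - s) * St j s)
              (volume.restrict (Set.Ioc (0:ℝ) u)) := fun j _ =>
          (((hKtm i j).comp (measurable_const.sub measurable_id)).mul (hStm j)).aemeasurable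
        rw [lintegral_congr_ae hcongr, lintegral_finset_sum' Finset.univ hmeasj]
      · rw [intervalIntegral.integral_undef hvec]
        simp
    -- a.e. description of `J` on `Ioc 0 t`
    have haeJ : ∀ᵐ u ∂(volume.restrict (Set.Ioc (0:ℝ) t)),
        J α u = J0 α u + ∫ s in (0:ℝ)..u, (K α (u - s)).mulVec (S α s) :=
      ae_restrict_of_ae_restrict_of_subset hsub (hJeq α)
    have hJ0aem : AEMeasurable (fun u => ENNReal.ofReal (∑ i, J0 α u i))
        (volume.restrict (Set.Ioc (0:ℝ) t)) := by
      have h : AEStronglyMeasurable (fun u => ∑ i, J0 α u i)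
          (volume.restrict (Set.Ioc (0:ℝ) t)) :=
        Finset.aestronglyMeasurable_fun_sum _ fun i _ =>
          (hJ0loc α i).aestronglyMeasurable.mono_measure (Measure.restrict_mono hsub le_rfl)
      exact ENNReal.measurable_ofReal.comp_aemeasurable h.aemeasurable
    -- the column bound on the measurable representative of `K`
    have hKcol : ∀ j : Fin (d α), ∑ i, ∫⁻ r in Set.Ici (0:ℝ), Kt i j r ≤ 1 := by
      intro j
      have heq : ∑ i, ∫⁻ r in Set.Ici (0:ℝ), Kt i j r
          = ∫⁻ r in Set.Ici (0:ℝ), ENNReal.ofReal (∑ i, K α r i j) := by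
        rw [← lintegral_finset_sum _ fun i _ => hKtm i j]
        apply lintegral_congr_ae
        filter_upwards [ae_all_iff.2 fun i => hKtae i j, ae_restrict_mem measurableSet_Ici]
          with r hr hmem
        rw [ENNReal.ofReal_sum_of_nonneg fun i _ => hKnn α r hmem i j]
        exact Finset.sum_congr rfl fun i _ => (hr i).symm
      rw [heq]
      exact hKbound α j
    have haeSt : ∀ᵐ u ∂(volume.restrict (Set.Ioc (0:ℝ) t)), ∀ j,
        ENNReal.ofReal (S α u j) = St j u := by
      rw [ae_all_iff]
      intro j
      exact ae_restrict_of_ae_restrict_of_subset hsub (hStae j)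
    -- the main estimate in `ℝ≥0∞`
    have main : (∫⁻ u in Set.Ioc 0 t, ENNReal.ofReal (∑ i, J α u i))
        ≤ ENNReal.ofReal (N0 α) + ∫⁻ u in Set.Ioc 0 t, ENNReal.ofReal (∑ i, S α u i) := by
      calc ∫⁻ u in Set.Ioc 0 t, ENNReal.ofReal (∑ i, J α u i)
          ≤ ∫⁻ u in Set.Ioc 0 t, (ENNReal.ofReal (∑ i, J0 α u i) +
              ENNReal.ofReal (∑ i, (∫ s in (0:ℝ)..u, (K α (u - s)).mulVec (S α s)) i)) := by
            apply lintegral_mono_ae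
            filter_upwards [haeJ] with u hJu
            have hsum : (∑ i, J α u i) = (∑ i, J0 α u i)
                + ∑ i, (∫ s in (0:ℝ)..u, (K α (u - s)).mulVec (S α s)) i := by
              rw [hJu]
              simp [Finset.sum_add_distrib]
            rw [hsum]
            exact ENNReal.ofReal_add_le
        _ = (∫⁻ u in Set.Ioc 0 t, ENNReal.ofReal (∑ i, J0 α u i))
            + ∫⁻ u in Set.Ioc 0 t,
              ENNReal.ofReal (∑ i, (∫ s in (0:ℝ)..u, (K α (u - s)).mulVec (S α s)) i) :=
            lintegral_add_left' hJ0aem _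
        _ ≤ ENNReal.ofReal (N0 α)
            + ∫⁻ u in Set.Ioc 0 t, ENNReal.ofReal (∑ i, S α u i) := by
            refine add_le_add ((lintegral_mono_set hsub).trans (hJ0bound α)) ?_
            calc ∫⁻ u in Set.Ioc 0 t,
                  ENNReal.ofReal (∑ i, (∫ s in (0:ℝ)..u, (K α (u - s)).mulVec (S α s)) i)
                ≤ ∫⁻ u in Set.Ioc 0 t,
                    ∑ i, ∑ j, ∫⁻ s in Set.Ioc 0 u, Kt i j (u - s) * St j s :=
                  setLIntegral_mono (Finset.measurable_sum _ fun i _ =>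
                    Finset.measurable_sum _ fun j _ => hΦmeas i j) claimA
              _ = ∑ i, ∑ j, ∫⁻ u in Set.Ioc 0 t,
                    ∫⁻ s in Set.Ioc 0 u, Kt i j (u - s) * St j s := by
                  rw [lintegral_finset_sum _ fun i _ =>
                    Finset.measurable_sum _ fun j _ => hΦmeas i j]
                  exact Finset.sum_congr rfl fun i _ =>
                    lintegral_finset_sum _ fun j _ => hΦmeas i j
              _ ≤ ∑ i, ∑ j, (∫⁻ r in Set.Ici (0:ℝ), Kt i j r)
                    * ∫⁻ s in Set.Ioc 0 t, St j s :=
                  Finset.sum_le_sum fun i _ => Finset.sum_le_sum fun j _ =>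
                    aux_conv_bound _ _ (hKtm i j) (hStm j) t
              _ = ∑ j, (∑ i, ∫⁻ r in Set.Ici (0:ℝ), Kt i j r)
                    * ∫⁻ s in Set.Ioc 0 t, St j s := by
                  rw [Finset.sum_comm]
                  exact Finset.sum_congr rfl fun j _ => (Finset.sum_mul _ _ _).symm
              _ ≤ ∑ j, ∫⁻ s in Set.Ioc 0 t, St j s := by
                  refine Finset.sum_le_sum fun j _ => ?_
                  calc (∑ i, ∫⁻ r in Set.Ici (0:ℝ), Kt i j r) * ∫⁻ s in Set.Ioc 0 t, St j s
                      ≤ 1 * ∫⁻ s in Set.Ioc 0 t, St j s := mul_le_mul_left (hKcol j) _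
                    _ = _ := one_mul _
              _ = ∫⁻ u in Set.Ioc 0 t, ∑ j, St j u :=
                  (lintegral_finset_sum _ fun j _ => hStm j).symm
              _ = ∫⁻ u in Set.Ioc 0 t, ENNReal.ofReal (∑ i, S α u i) := by
                  apply lintegral_congr_ae
                  filter_upwards [haeSt, ae_restrict_mem measurableSet_Ioc] with u hSu hmem
                  rw [ENNReal.ofReal_sum_of_nonneg fun j _ => hSnn α j u hmem.1.le]
                  exact Finset.sum_congr rfl fun j _ => (hSu j).symm
    -- conclude in `ℝ`
    have htot : (ENNReal.ofReal (N0 α)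
        + ∫⁻ u in Set.Ioc 0 t, ENNReal.ofReal (∑ i, S α u i)) ≠ ⊤ :=
      ENNReal.add_ne_top.2 ⟨ENNReal.ofReal_ne_top, hRFfin⟩
    have := ENNReal.toReal_mono htot main
    rwa [ENNReal.toReal_add ENNReal.ofReal_ne_top hRFfin,
      ENNReal.toReal_ofReal (hN0 α)] at this
  linarith
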